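/- There exists an absolute constant C > 0 such that for every n and every admissible digit datum (A, α) on n bits with ρ ≤ 1/2, one has 2^r · ∫_0^1 |\hat f(θ)| dθ ≤ 2^{C ρ log(1/ρ) n − n}. -/

import Mathlib

open Finset

/-- The indicator function of integers `x < 2^n` whose binary digit at position `j`
equals `α j` for every `j ∈ A`. -/
def digitIndicator (A : Finset ℕ) (α : ℕ → ℕ) (x : ℕ) : ℕ :=
  if ∀ j ∈ A, x / 2 ^ j % 2 = α j then 1 else 0

/-- The normalized Fourier transform `\hat f(λ) = 2^{-n} ∑_{x < 2^n} f(x) e^{2πiλx}`. -/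
noncomputable def fhat (n : ℕ) (A : Finset ℕ) (α : ℕ → ℕ) (lam : ℝ) : ℂ :=
  (2 ^ n : ℂ)⁻¹ * ∑ x ∈ Finset.range (2 ^ n),
    (digitIndicator A α x : ℂ) * Complex.exp (2 * Real.pi * Complex.I * lam * x)

open Real

/-- minimum distance (in units of 2^-L) of the dyadic cell [v/2^L,(v+1)/2^L] to ℤ -/
def cmin (L v : ℕ) : ℕ := min v (2 ^ L - 1 - v)

/-- per-block weight -/
noncomputable def G (L v : ℕ) : ℝ :=
  if cmin L v = 0 then 2 ^ L else min ((2:ℝ) ^ L) ((2:ℝ) ^ L / (2 * cmin L v))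

lemma G_nonneg (L v : ℕ) : 0 ≤ G L v := by
  unfold G
  split
  · positivity
  · refine le_min (by positivity) (by positivity)

/-- base-a splitting of a sum over range (a*b) -/
lemma sum_split (a b : ℕ) (ha : 0 < a) (f g : ℕ → ℝ) :
    ∑ y ∈ range (a * b), f (y % a) * g (y / a)
      = (∑ v ∈ range a, f v) * (∑ w ∈ range b, g w) := by
  induction b with
  | zero => simp
  | succ b ih =>
    rw [Nat.mul_succ, Finset.sum_range_add, ih, Finset.sum_range_succ, mul_add]
    congr 1
    have : ∀ i ∈ range a, f ((a * b + i) % a) * g ((a * b + i) / a) = f i * g b := by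
      intro i hi
      have hi' : i < a := mem_range.mp hi
      rw [Nat.mul_add_mod, Nat.mod_eq_of_lt hi', Nat.mul_add_div ha, Nat.div_eq_of_lt hi',
        Nat.add_zero]
    rw [Finset.sum_congr rfl this, ← Finset.sum_mul]

lemma harmonic_le (L : ℕ) :
    ∑ w ∈ range (2 ^ L), (if w = 0 then (0:ℝ) else 1 / w) ≤ L := by
  induction L with
  | zero => simp
  | succ L ih =>
    have h2 : (2:ℕ) ^ (L + 1) = 2 ^ L + 2 ^ L := by ring
    rw [h2, Finset.sum_range_add]
    push_cast
    have hb : ∀ i ∈ range (2 ^ L), (if 2 ^ L + i = 0 then (0:ℝ) else 1 / (2 ^ L + i))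
        ≤ (2 ^ L : ℝ)⁻¹ := by
      intro i _
      have hpos : 0 < 2 ^ L + i := by positivity
      rw [if_neg hpos.ne']
      rw [one_div]
      apply inv_anti₀ (by positivity)
      push_cast; linarith [Nat.cast_nonneg (α := ℝ) i]
    calc ∑ w ∈ range (2 ^ L), (if w = 0 then (0:ℝ) else 1 / w)
          + ∑ i ∈ range (2 ^ L), (if 2 ^ L + i = 0 then (0:ℝ) else 1 / (2 ^ L + i))
        ≤ (L:ℝ) + ∑ i ∈ range (2 ^ L), (2 ^ L : ℝ)⁻¹ :=
          add_le_add ih (Finset.sum_le_sum hb)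
      _ ≤ L + 1 := by
          rw [Finset.sum_const, card_range, nsmul_eq_mul]
          push_cast
          rw [mul_inv_cancel₀ (by positivity)]
  
lemma sumG_le (L : ℕ) : ∑ v ∈ range (2 ^ L), G L v ≤ 2 ^ L * (2 * (L + 1)) := by
  set f : ℕ → ℝ := fun w => if w = 0 then (2:ℝ) ^ L else (2:ℝ) ^ L / (2 * w) with hf
  have hf_nonneg : ∀ w, 0 ≤ f w := by
    intro w; rw [hf]; dsimp only; split <;> positivity
  have key : ∀ v ∈ range (2 ^ L), G L v ≤ f v + f (2 ^ L - 1 - v) := by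
    intro v hv
    have hv' : v < 2 ^ L := mem_range.mp hv
    unfold G cmin
    split
    · rename_i h
      rcases Nat.min_eq_zero_iff.mp h with h0 | h0
      · rw [h0]; simp only [f, if_pos rfl]
        have := hf_nonneg (2 ^ L - 1 - 0)
        simp only [f] at this
        nlinarith [this]
      · rw [h0]; simp only [f, if_pos rfl]
        have := hf_nonneg v
        simp only [f] at this
        nlinarith [this]
    · rename_i h
      have hmin : 0 < min v (2 ^ L - 1 - v) := Nat.pos_of_ne_zero h
      rcases min_cases v (2 ^ L - 1 - v) with ⟨he, _⟩ | ⟨he, _⟩ <;> rw [he]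
      · have hvpos : 0 < v := lt_of_lt_of_le hmin (by omega)
        calc min ((2:ℝ) ^ L) ((2:ℝ) ^ L / (2 * v)) ≤ (2:ℝ) ^ L / (2 * v) := min_le_right _ _
          _ = f v := by rw [hf]; dsimp only; rw [if_neg hvpos.ne']
          _ ≤ f v + f (2 ^ L - 1 - v) := by nlinarith [hf_nonneg (2 ^ L - 1 - v)]
      · have hvpos : 0 < 2 ^ L - 1 - v := by omega
        calc min ((2:ℝ) ^ L) ((2:ℝ) ^ L / (2 * (2 ^ L - 1 - v : ℕ)))
              ≤ (2:ℝ) ^ L / (2 * (2 ^ L - 1 - v : ℕ)) := min_le_right _ _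
          _ = f (2 ^ L - 1 - v) := by rw [hf]; dsimp only; rw [if_neg hvpos.ne']
          _ ≤ f v + f (2 ^ L - 1 - v) := by nlinarith [hf_nonneg v]
  have hsumf : ∑ w ∈ range (2 ^ L), f w ≤ 2 ^ L + 2 ^ L / 2 * L := by
    have : ∀ w, f w = (if w = 0 then (2:ℝ) ^ L else 0)
        + (2:ℝ) ^ L / 2 * (if w = 0 then (0:ℝ) else 1 / w) := by
      intro w; rw [hf]; dsimp only; split
      · simp
      · rw [zero_add]; field_simp
    rw [Finset.sum_congr rfl (fun w _ => this w), Finset.sum_add_distrib, ← Finset.mul_sum]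
    have h1 : ∑ w ∈ range (2 ^ L), (if w = 0 then (2:ℝ) ^ L else 0) = 2 ^ L := by
      rw [Finset.sum_ite_eq' (range (2 ^ L)) 0 (fun _ => (2:ℝ) ^ L)]
      rw [if_pos (mem_range.mpr (by positivity))]
    rw [h1]
    have := harmonic_le L
    nlinarith [pow_pos (by norm_num : (0:ℝ) < 2) L]
  calc ∑ v ∈ range (2 ^ L), G L v ≤ ∑ v ∈ range (2 ^ L), (f v + f (2 ^ L - 1 - v)) :=
        Finset.sum_le_sum key
    _ = ∑ v ∈ range (2 ^ L), f v + ∑ v ∈ range (2 ^ L), f (2 ^ L - 1 - v) :=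
        Finset.sum_add_distrib
    _ = 2 * ∑ v ∈ range (2 ^ L), f v := by rw [Finset.sum_range_reflect]; ring
    _ ≤ 2 * (2 ^ L + 2 ^ L / 2 * L) := by linarith [hsumf]
    _ ≤ 2 ^ L * (2 * (L + 1)) := by ring_nf; nlinarith [pow_pos (by norm_num : (0:ℝ) < 2) L]


noncomputable def W : ℕ → Finset ℕ → ℕ → ℝ
  | n, A, y =>
    if h : A.Nonempty then
      have : (A.erase (A.max' h)).card < A.card :=
        Finset.card_erase_lt_of_mem (A.max'_mem h)
      G (n - A.max' h - 1) (y % 2 ^ (n - A.max' h - 1)) *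
        W (A.max' h) (A.erase (A.max' h)) (y / 2 ^ (n - A.max' h))
    else 1
  termination_by n A y => A.card

noncomputable def bnd : ℕ → Finset ℕ → ℝ
  | n, A =>
    if h : A.Nonempty then
      have : (A.erase (A.max' h)).card < A.card :=
        Finset.card_erase_lt_of_mem (A.max'_mem h)
      2 * ((n : ℝ) - (A.max' h : ℝ)) * bnd (A.max' h) (A.erase (A.max' h))
    else 1
  termination_by n A => A.card

lemma W_eq (n : ℕ) (A : Finset ℕ) (y : ℕ) (h : A.Nonempty) :
    W n A y = G (n - A.max' h - 1) (y % 2 ^ (n - A.max' h - 1)) *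
        W (A.max' h) (A.erase (A.max' h)) (y / 2 ^ (n - A.max' h)) := by
  rw [W]; rw [dif_pos h]

lemma W_empty (n y : ℕ) : W n ∅ y = 1 := by rw [W]; simp

lemma bnd_eq (n : ℕ) (A : Finset ℕ) (h : A.Nonempty) :
    bnd n A = 2 * ((n : ℝ) - (A.max' h : ℝ)) * bnd (A.max' h) (A.erase (A.max' h)) := by
  rw [bnd]; rw [dif_pos h]

lemma bnd_empty (n : ℕ) : bnd n ∅ = 1 := by rw [bnd]; simp

-- structural invariant helpers
lemma erase_max_subset {A : Finset ℕ} {n : ℕ} (h : A.Nonempty) (hA : A ⊆ range n) :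
    A.erase (A.max' h) ⊆ range (A.max' h) := by
  intro j hj
  rw [Finset.mem_erase] at hj
  exact mem_range.mpr (lt_of_le_of_ne (A.le_max' j hj.2) hj.1)

lemma erase_max_inv {A : Finset ℕ} {n : ℕ} (h : A.Nonempty) (hA : A ⊆ range n)
    (hinv : 0 ∈ A ∨ n = 0) : 0 ∈ A.erase (A.max' h) ∨ A.max' h = 0 := by
  rcases hinv with h0 | h0
  · rcases Nat.eq_zero_or_pos (A.max' h) with hm | hm
    · right; exact hm
    · left; exact Finset.mem_erase.mpr ⟨by omega, h0⟩
  · exfalso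
    have := hA (A.max'_mem h)
    rw [h0] at this
    simp at this

lemma W_nonneg : ∀ (s : ℕ) (A : Finset ℕ), A.card = s → ∀ n y, 0 ≤ W n A y := by
  intro s
  induction s with
  | zero =>
    intro A hA n y
    rw [Finset.card_eq_zero.mp hA, W_empty]
    norm_num
  | succ s ih =>
    intro A hA n y
    have h : A.Nonempty := Finset.card_pos.mp (by omega)
    rw [W_eq n A y h]
    have hcard : (A.erase (A.max' h)).card = s := by
      rw [Finset.card_erase_of_mem (A.max'_mem h), hA]
      omega
    exact mul_nonneg (G_nonneg _ _) (ih _ hcard _ _)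

lemma bnd_nonneg : ∀ (s : ℕ) (A : Finset ℕ), A.card = s → ∀ n, A ⊆ range n → 0 ≤ bnd n A := by
  intro s
  induction s with
  | zero =>
    intro A hA n _
    rw [Finset.card_eq_zero.mp hA, bnd_empty]; norm_num
  | succ s ih =>
    intro A hA n hsub
    have h : A.Nonempty := Finset.card_pos.mp (by omega)
    rw [bnd_eq n A h]
    have hcard : (A.erase (A.max' h)).card = s := by
      rw [Finset.card_erase_of_mem (A.max'_mem h), hA]
      omega
    have hm : A.max' h < n := mem_range.mp (hsub (A.max'_mem h))
    have h1 : (0:ℝ) ≤ 2 * ((n : ℝ) - (A.max' h : ℝ)) := by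
      have : (A.max' h : ℝ) ≤ n := by exact_mod_cast hm.le
      linarith
    exact mul_nonneg h1 (ih _ hcard _ (erase_max_subset h hsub))

lemma sumW_le : ∀ (s : ℕ) (A : Finset ℕ), A.card = s → ∀ n, A ⊆ range n → (0 ∈ A ∨ n = 0) →
    ∑ y ∈ range (2 ^ n), W n A y ≤ 2 ^ n * bnd n A := by
  intro s
  induction s with
  | zero =>
    intro A hA n hsub hinv
    have hAe : A = ∅ := Finset.card_eq_zero.mp hA
    subst hAe
    have hn : n = 0 := by
      rcases hinv with h | h
      · simp at h
      · exact h
    subst hn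
    simp [W_empty, bnd_empty]
  | succ s ih =>
    intro A hA n hsub hinv
    have h : A.Nonempty := Finset.card_pos.mp (by omega)
    set m := A.max' h with hm
    have hmn : m < n := mem_range.mp (hsub (A.max'_mem h))
    set L := n - m - 1 with hL
    have hcard : (A.erase m).card = s := by
      rw [Finset.card_erase_of_mem (A.max'_mem h), hA]
      omega
    have hnm : n - m = L + 1 := by omega
    have hpow : 2 ^ n = 2 ^ (L + 1) * 2 ^ m := by
      rw [← pow_add]; congr 1; omega
    have hstep : ∀ y, W n A y = G L ((y % 2 ^ (L + 1)) % 2 ^ L) * W m (A.erase m) (y / 2 ^ (L + 1)) := by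
      intro y
      rw [W_eq n A y h, ← hm, ← hL, hnm]
      rw [Nat.mod_mod_of_dvd y (pow_dvd_pow 2 (by omega))]
    calc ∑ y ∈ range (2 ^ n), W n A y
        = ∑ y ∈ range (2 ^ (L + 1) * 2 ^ m),
            (fun z => G L (z % 2 ^ L)) (y % 2 ^ (L + 1)) * W m (A.erase m) (y / 2 ^ (L + 1)) := by
          rw [← hpow]; exact Finset.sum_congr rfl (fun y _ => hstep y)
      _ = (∑ z ∈ range (2 ^ (L + 1)), (fun z => G L (z % 2 ^ L)) z) * (∑ w ∈ range (2 ^ m), W m (A.erase m) w) :=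
          sum_split (2 ^ (L + 1)) (2 ^ m) (pow_pos (by norm_num : (0:ℕ) < 2) _)
            (fun z => G L (z % 2 ^ L)) (W m (A.erase m))
      _ ≤ (2 ^ (L + 1) * (2 * (L + 1))) * (2 ^ m * bnd m (A.erase m)) := by
          apply mul_le_mul
          · -- ∑ z ∈ range (2^(L+1)), G L (z % 2^L) ≤ 2^(L+1) * (2*(L+1))
            have h2 : (2:ℕ) ^ (L + 1) = 2 ^ L * 2 := by ring
            have hss : ∑ z ∈ range (2 ^ L * 2), G L (z % 2 ^ L) * (fun _ => (1:ℝ)) (z / 2 ^ L)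
                = (∑ v ∈ range (2 ^ L), G L v) * (∑ w ∈ range 2, (1:ℝ)) :=
              sum_split (2 ^ L) 2 (pow_pos (by norm_num : (0:ℕ) < 2) _) (G L) (fun _ => (1:ℝ))
            simp only [mul_one] at hss
            simp only []
            rw [h2, hss]
            simp only [Finset.sum_const, card_range, nsmul_eq_mul, mul_one]
            have := sumG_le L
            rw [pow_succ]
            push_cast
            linarith
          · exact ih _ hcard m (erase_max_subset h hsub) (erase_max_inv h hsub hinv)
          · exact Finset.sum_nonneg (fun w _ => W_nonneg s _ hcard _ _)
          · positivity
      _ = 2 ^ n * bnd n A := by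
          rw [bnd_eq n A h, ← hm]
          have hc : (L:ℝ) + 1 = (n:ℝ) - (m:ℝ) := by
            have h1 : L + 1 + m = n := by omega
            have h2 := congrArg (Nat.cast : ℕ → ℝ) h1
            push_cast at h2
            linarith
          have hpr : (2:ℝ) ^ n = 2 ^ (L + 1) * 2 ^ m := by
            rw [← pow_add]
            congr 1
            omega
          rw [hpr, ← hc]
          push_cast
          ring


lemma bnd_le : ∀ (s : ℕ) (A : Finset ℕ), A.card = s → ∀ n, A ⊆ range n → (0 ∈ A ∨ n = 0) →
    ∀ T : ℝ, 1 ≤ T →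
    bnd n A ≤ 2 ^ s * T ^ s * Real.exp ((n : ℝ) / T - s) := by
  intro s
  induction s with
  | zero =>
    intro A hA n hsub hinv T hT
    have hAe : A = ∅ := Finset.card_eq_zero.mp hA
    subst hAe
    have hn : n = 0 := by
      rcases hinv with h | h
      · simp at h
      · exact h
    subst hn
    simp [bnd_empty]
  | succ s ih =>
    intro A hA n hsub hinv T hT
    have h : A.Nonempty := Finset.card_pos.mp (by omega)
    set m := A.max' h with hm
    have hmn : m < n := mem_range.mp (hsub (A.max'_mem h))
    have hcard : (A.erase m).card = s := by
      rw [Finset.card_erase_of_mem (A.max'_mem h), hA]; omega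
    have hT0 : 0 < T := by linarith
    have ihe := ih _ hcard m (erase_max_subset h hsub) (erase_max_inv h hsub hinv) T hT
    rw [bnd_eq n A h, ← hm]
    have hkey : (n : ℝ) - m ≤ T * Real.exp (((n:ℝ) - m) / T - 1) := by
      have h1 := Real.add_one_le_exp (((n:ℝ) - m) / T - 1)
      have h2 : ((n:ℝ) - m) / T ≤ Real.exp (((n:ℝ) - m) / T - 1) := by linarith
      calc (n:ℝ) - m = T * (((n:ℝ) - m) / T) := by field_simp
        _ ≤ T * Real.exp (((n:ℝ) - m) / T - 1) := by
            apply mul_le_mul_of_nonneg_left h2 (le_of_lt hT0)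
    have hnm0 : (0:ℝ) ≤ (n:ℝ) - m := by
      have : (m:ℝ) ≤ n := by exact_mod_cast hmn.le
      linarith
    have hbnd_nn : 0 ≤ bnd m (A.erase m) :=
      bnd_nonneg s _ hcard m (erase_max_subset h hsub)
    calc 2 * ((n : ℝ) - m) * bnd m (A.erase m)
        ≤ 2 * (T * Real.exp (((n:ℝ) - m) / T - 1)) * (2 ^ s * T ^ s * Real.exp ((m : ℝ) / T - s)) := by
          apply mul_le_mul
          · apply mul_le_mul_of_nonneg_left hkey (by norm_num)
          · exact ihe
          · exact hbnd_nn
          · positivity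
      _ = 2 ^ (s+1) * T ^ (s+1) * Real.exp ((n : ℝ) / T - (s+1)) := by
          have hexp : Real.exp ((↑n - ↑m) / T - 1) * Real.exp ((m:ℝ) / T - s)
              = Real.exp ((n:ℝ) / T - (s+1)) := by
            rw [← Real.exp_add]
            congr 1
            field_simp
            ring
          calc 2 * (T * Real.exp ((↑n - ↑m) / T - 1)) * (2 ^ s * T ^ s * Real.exp ((m:ℝ) / T - s))
              = 2 ^ (s+1) * T ^ (s+1) *
                  (Real.exp ((↑n - ↑m) / T - 1) * Real.exp ((m:ℝ) / T - s)) := by ring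
            _ = 2 ^ (s+1) * T ^ (s+1) * Real.exp ((n : ℝ) / T - (s+1)) := by rw [hexp]
      _ = 2 ^ (s+1) * T ^ (s+1) * Real.exp ((n : ℝ) / T - ((s:ℕ)+1:ℕ)) := by push_cast; ring_nf


/-- telescoping product of doubled cosines -/
lemma telescope (θ : ℝ) (b : ℕ) : ∀ k : ℕ,
    (∏ j ∈ Ico b (b + k), (2 * |Real.cos (π * (2 ^ j * θ))|)) * |Real.sin (π * (2 ^ b * θ))|
      = |Real.sin (π * (2 ^ (b + k) * θ))| := by
  intro k
  induction k with
  | zero => simp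
  | succ k ih =>
    have hidx : b + (k + 1) = (b + k) + 1 := by omega
    rw [hidx, Finset.prod_Ico_succ_top (by omega : b ≤ b + k)]
    have harg : π * (2 ^ (b + k + 1) * θ) = 2 * (π * (2 ^ (b + k) * θ)) := by
      rw [pow_succ]; ring_nf
    rw [harg, Real.sin_two_mul, abs_mul, abs_mul, abs_two, ← ih]
    ring

/-- lower bound for |sin| away from the integers -/
lemma sin_lb {u d : ℝ} (hd : 0 < d) (h1 : d ≤ u) (h2 : u ≤ 1 - d) :
    2 * d ≤ |Real.sin (π * u)| := by
  have hd2 : d ≤ 1/2 := by linarith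
  have key : ∀ w : ℝ, d ≤ w → w ≤ 1/2 → 2 * d ≤ Real.sin (π * w) := by
    intro w hw1 hw2
    have h0 : (0:ℝ) ≤ π * w := mul_nonneg Real.pi_pos.le (by linarith)
    have hpi2 : π * w ≤ π / 2 := by nlinarith [Real.pi_pos]
    have hms := Real.mul_le_sin h0 hpi2
    have : 2 * w = 2 / π * (π * w) := by field_simp
    linarith
  rcases le_or_gt u (1/2) with hc | hc
  · exact le_trans (key u h1 hc) (le_abs_self _)
  · have h1' : d ≤ 1 - u := by linarith
    have h2' : 1 - u ≤ 1/2 := by linarith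
    have hk := key (1 - u) h1' h2'
    have hs : Real.sin (π * (1 - u)) = Real.sin (π * u) := by
      rw [show π * (1 - u) = π - π * u by ring, Real.sin_pi_sub]
    rw [hs] at hk
    exact le_trans hk (le_abs_self _)

/-- main block bound -/
lemma blockBound (n b y : ℕ) (θ : ℝ) (hbn : b ≤ n)
    (hθ1 : (y:ℝ) / 2 ^ n ≤ θ) (hθ2 : θ ≤ ((y:ℝ) + 1) / 2 ^ n) :
    ∏ j ∈ Ico b n, (2 * |Real.cos (π * (2 ^ j * θ))|) ≤ G (n - b) (y % 2 ^ (n - b)) := by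
  set L := n - b with hL
  set v := y % 2 ^ L with hv
  set q := y / 2 ^ L with hq
  have hvlt : v < 2 ^ L := Nat.mod_lt _ (pow_pos (by norm_num) _)
  have hyqv : 2 ^ L * q + v = y := Nat.div_add_mod y (2 ^ L)
  have hprod_nn : 0 ≤ ∏ j ∈ Ico b n, (2 * |Real.cos (π * (2 ^ j * θ))|) :=
    Finset.prod_nonneg (fun j _ => by positivity)
  -- trivial bound: product ≤ 2^L
  have htriv : ∏ j ∈ Ico b n, (2 * |Real.cos (π * (2 ^ j * θ))|) ≤ 2 ^ L := by
    calc ∏ j ∈ Ico b n, (2 * |Real.cos (π * (2 ^ j * θ))|)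
        ≤ ∏ j ∈ Ico b n, 2 := by
          apply Finset.prod_le_prod
          · intro j _; positivity
          · intro j _
            have := abs_cos_le_one (π * (2 ^ j * θ))
            linarith
      _ = 2 ^ L := by rw [Finset.prod_const, Nat.card_Ico]
  unfold G
  split
  · exact htriv
  · rename_i hc
    have hcpos : 0 < cmin L v := Nat.pos_of_ne_zero hc
    refine le_min htriv ?_
    set c : ℕ := cmin L v with hcdef
    have hc1 : c ≤ v := min_le_left _ _
    have hc2 : c ≤ 2 ^ L - 1 - v := min_le_right _ _
    set u : ℝ := 2 ^ b * θ - q with hu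
    have h2n : (2:ℝ) ^ n = 2 ^ b * 2 ^ L := by
      rw [← pow_add]; congr 1; omega
    have hb0 : (0:ℝ) < 2 ^ b := by positivity
    have hL0 : (0:ℝ) < 2 ^ L := by positivity
    have hyr : (y:ℝ) = 2 ^ L * q + v := by exact_mod_cast congrArg (Nat.cast : ℕ → ℝ) hyqv.symm
    have hu1 : (v:ℝ) / 2 ^ L ≤ u := by
      rw [hu]
      have : (2:ℝ) ^ b * ((y:ℝ) / 2 ^ n) = q + v / 2 ^ L := by
        rw [h2n, hyr]; field_simp
      nlinarith [mul_le_mul_of_nonneg_left hθ1 hb0.le]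
    have hu2 : u ≤ ((v:ℝ) + 1) / 2 ^ L := by
      rw [hu]
      have : (2:ℝ) ^ b * (((y:ℝ) + 1) / 2 ^ n) = q + ((v:ℝ) + 1) / 2 ^ L := by
        rw [h2n, hyr]; field_simp; ring
      nlinarith [mul_le_mul_of_nonneg_left hθ2 hb0.le]
    have hcv : (c:ℝ) ≤ v := by exact_mod_cast hc1
    have hd1 : (c:ℝ) / 2 ^ L ≤ u := le_trans (by gcongr) hu1
    have hnat : c + v + 1 ≤ 2 ^ L := by
      have h1 : 0 < 2 ^ L := pow_pos (by norm_num) L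
      omega
    have hd2 : u ≤ 1 - (c:ℝ) / 2 ^ L := by
      have hcast : (c:ℝ) + v + 1 ≤ 2 ^ L := by exact_mod_cast hnat
      have he : (1 : ℝ) - (c:ℝ) / 2 ^ L = ((2:ℝ) ^ L - c) / 2 ^ L := by field_simp
      have : ((v:ℝ) + 1) / 2 ^ L ≤ 1 - (c:ℝ) / 2 ^ L := by
        rw [he]
        gcongr
        linarith
      linarith [hu2]
    have hcr : (0:ℝ) < (c:ℝ) / 2 ^ L := by
      have : (0:ℝ) < (c:ℝ) := by exact_mod_cast hcpos
      positivity
    have htel := telescope θ b L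
    have hbL : b + L = n := by omega
    rw [hbL] at htel
    have hshift : |Real.sin (π * (2 ^ b * θ))| = |Real.sin (π * u)| := by
      have harg : π * (2 ^ b * θ) = π * u + q * π := by rw [hu]; ring
      rw [harg, Real.sin_add_nat_mul_pi, abs_mul, abs_pow, abs_neg, abs_one, one_pow, one_mul]
    have hsin := sin_lb hcr hd1 hd2
    have hfin : (∏ j ∈ Ico b n, (2 * |Real.cos (π * (2 ^ j * θ))|)) * (2 * ((c:ℝ) / 2 ^ L)) ≤ 1 := by
      calc (∏ j ∈ Ico b n, (2 * |Real.cos (π * (2 ^ j * θ))|)) * (2 * ((c:ℝ) / 2 ^ L))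
          ≤ (∏ j ∈ Ico b n, (2 * |Real.cos (π * (2 ^ j * θ))|)) * |Real.sin (π * u)| := by
            apply mul_le_mul_of_nonneg_left hsin hprod_nn
        _ = |Real.sin (π * (2 ^ n * θ))| := by rw [← hshift]; exact htel
        _ ≤ 1 := abs_sin_le_one _
    rw [le_div_iff₀ (by positivity : (0:ℝ) < 2 * (c:ℝ))]
    calc (∏ j ∈ Ico b n, (2 * |Real.cos (π * (2 ^ j * θ))|)) * (2 * (c:ℝ))
        = ((∏ j ∈ Ico b n, (2 * |Real.cos (π * (2 ^ j * θ))|)) * (2 * ((c:ℝ) / 2 ^ L))) * 2 ^ L := by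
          rw [mul_assoc]; congr 1; field_simp
      _ ≤ 1 * 2 ^ L := by
          apply mul_le_mul_of_nonneg_right hfin hL0.le
      _ = 2 ^ L := one_mul _


-- digit computations
lemma dig_lt {x n : ℕ} (hx : x < 2 ^ n) : x / 2 ^ n % 2 = 0 := by
  rw [Nat.div_eq_of_lt hx]

lemma dig_add_high {x n j : ℕ} (hj : j < n) : (2 ^ n + x) / 2 ^ j % 2 = x / 2 ^ j % 2 := by
  have h1 : 2 ^ n + x = 2 ^ j * (2 ^ (n - j - 1) * 2) + x := by
    rw [mul_comm (2 ^ (n - j - 1)) 2, ← pow_succ', ← pow_add]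
    congr 2
    omega
  rw [h1, Nat.mul_add_div (pow_pos (by norm_num) j), Nat.add_comm, Nat.add_mul_mod_self_right]

lemma dig_top {x n : ℕ} (hx : x < 2 ^ n) : (2 ^ n + x) / 2 ^ n % 2 = 1 := by
  have h1 : (2 ^ n + x) / 2 ^ n = 1 := by
    apply Nat.div_eq_of_lt_le
    · omega
    · omega
  rw [h1]

-- indicator splitting lemmas
lemma di_low {A : Finset ℕ} {α : ℕ → ℕ} {n x : ℕ} (hn : n ∈ A) (hx : x < 2 ^ n) :
    digitIndicator A α x = if α n = 0 then digitIndicator (A.erase n) α x else 0 := by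
  have hiff : (∀ j ∈ A, x / 2 ^ j % 2 = α j)
      ↔ (0 = α n ∧ ∀ j ∈ A.erase n, x / 2 ^ j % 2 = α j) := by
    constructor
    · intro h
      exact ⟨by rw [← dig_lt hx]; exact h n hn,
        fun j hj => h j (Finset.mem_of_mem_erase hj)⟩
    · rintro ⟨h0, h⟩ j hj
      rcases eq_or_ne j n with rfl | hne
      · rw [dig_lt hx]; exact h0
      · exact h j (Finset.mem_erase.mpr ⟨hne, hj⟩)
  unfold digitIndicator
  by_cases h0 : α n = 0
  · rw [if_pos h0]
    congr 1
    apply propext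
    rw [hiff]
    simp [h0]
  · rw [if_neg]
    · rw [if_neg h0]
    · rw [hiff]
      rintro ⟨h1, -⟩
      exact h0 h1.symm

lemma di_high {A : Finset ℕ} {α : ℕ → ℕ} {n x : ℕ} (hn : n ∈ A) (hA : A ⊆ range (n + 1))
    (hx : x < 2 ^ n) :
    digitIndicator A α (2 ^ n + x) = if α n = 1 then digitIndicator (A.erase n) α x else 0 := by
  have hjlt : ∀ j ∈ A.erase n, j < n := by
    intro j hj
    have h1 := (Finset.mem_erase.mp hj).1
    have h2 := mem_range.mp (hA (Finset.mem_of_mem_erase hj))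
    omega
  have hiff : (∀ j ∈ A, (2 ^ n + x) / 2 ^ j % 2 = α j)
      ↔ (1 = α n ∧ ∀ j ∈ A.erase n, x / 2 ^ j % 2 = α j) := by
    constructor
    · intro h
      refine ⟨by rw [← dig_top hx]; exact h n hn, fun j hj => ?_⟩
      rw [← dig_add_high (hjlt j hj)]
      exact h j (Finset.mem_of_mem_erase hj)
    · rintro ⟨h0, h⟩ j hj
      rcases eq_or_ne j n with rfl | hne
      · rw [dig_top hx]; exact h0
      · rw [dig_add_high (hjlt j (Finset.mem_erase.mpr ⟨hne, hj⟩))]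
        exact h j (Finset.mem_erase.mpr ⟨hne, hj⟩)
  unfold digitIndicator
  by_cases h0 : α n = 1
  · rw [if_pos h0]
    congr 1
    apply propext
    rw [hiff]
    simp [h0]
  · rw [if_neg]
    · rw [if_neg h0]
    · rw [hiff]
      rintro ⟨h1, -⟩
      exact h0 h1.symm

lemma di_notin {A : Finset ℕ} {α : ℕ → ℕ} {n x : ℕ} (hA : A ⊆ range n) :
    digitIndicator A α (2 ^ n + x) = digitIndicator A α x := by
  unfold digitIndicator
  congr 1
  apply propext
  apply forall₂_congr
  intro j hj
  rw [dig_add_high (mem_range.mp (hA hj))]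

/-- the product formula -/
lemma prodFormula (c : ℂ) (α : ℕ → ℕ) : ∀ (n : ℕ) (A : Finset ℕ), A ⊆ range n →
    (∀ j ∈ A, α j ≤ 1) →
    ∑ x ∈ range (2 ^ n), (digitIndicator A α x : ℂ) * Complex.exp (c * x)
      = ∏ j ∈ range n, (if j ∈ A then Complex.exp (c * ((α j : ℂ) * 2 ^ j))
          else (1 + Complex.exp (c * 2 ^ j))) := by
  intro n
  induction n with
  | zero =>
    intro A hA _
    rw [Finset.range_zero, Finset.subset_empty] at hA
    subst hA
    simp [digitIndicator]
  | succ n ih =>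
    intro A hA hα
    have hsplit : (2:ℕ) ^ (n + 1) = 2 ^ n + 2 ^ n := by ring
    rw [hsplit, Finset.sum_range_add, Finset.prod_range_succ]
    have hexp_add : ∀ x : ℕ, Complex.exp (c * ((2 ^ n + x : ℕ) : ℂ))
        = Complex.exp (c * (2 ^ n : ℂ)) * Complex.exp (c * (x : ℂ)) := by
      intro x
      rw [← Complex.exp_add]
      congr 1
      push_cast
      ring
    by_cases hnA : n ∈ A
    · have hA' : A.erase n ⊆ range n := by
        intro j hj
        have h1 := (Finset.mem_erase.mp hj).1
        have h2 := mem_range.mp (hA (Finset.mem_of_mem_erase hj))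
        exact mem_range.mpr (by omega)
      have hα' : ∀ j ∈ A.erase n, α j ≤ 1 := fun j hj => hα j (Finset.mem_of_mem_erase hj)
      have ihe := ih (A.erase n) hA' hα'
      have hprodc : ∏ j ∈ range n, (if j ∈ A then Complex.exp (c * ((α j : ℂ) * 2 ^ j))
            else (1 + Complex.exp (c * 2 ^ j)))
          = ∏ j ∈ range n, (if j ∈ A.erase n then Complex.exp (c * ((α j : ℂ) * 2 ^ j))
            else (1 + Complex.exp (c * 2 ^ j))) := by
        apply Finset.prod_congr rfl
        intro j hj
        have hjn : j ≠ n := by have := mem_range.mp hj; omega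
        by_cases hjA : j ∈ A
        · rw [if_pos hjA, if_pos (Finset.mem_erase.mpr ⟨hjn, hjA⟩)]
        · rw [if_neg hjA, if_neg (fun hc' => hjA (Finset.mem_of_mem_erase hc'))]
      rw [if_pos hnA, hprodc, ← ihe]
      rcases Nat.le_one_iff_eq_zero_or_eq_one.mp (hα n hnA) with h0 | h1
      · -- α n = 0 : low part survives
        have hS1 : ∀ x ∈ range (2 ^ n), (digitIndicator A α x : ℂ) * Complex.exp (c * x)
            = (digitIndicator (A.erase n) α x : ℂ) * Complex.exp (c * x) := by
          intro x hx
          rw [di_low hnA (mem_range.mp hx), if_pos h0]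
        have hS2 : ∀ x ∈ range (2 ^ n),
            (digitIndicator A α (2 ^ n + x) : ℂ) * Complex.exp (c * ((2 ^ n + x : ℕ) : ℂ))
            = 0 := by
          intro x hx
          rw [di_high hnA hA (mem_range.mp hx), if_neg (by omega)]
          simp
        rw [Finset.sum_congr rfl hS1, Finset.sum_congr rfl hS2]
        rw [h0]
        push_cast
        rw [Finset.sum_const, smul_zero]
        simp [Complex.exp_zero]
      · -- α n = 1 : high part survives
        have hS1 : ∀ x ∈ range (2 ^ n), (digitIndicator A α x : ℂ) * Complex.exp (c * x)
            = 0 := by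
          intro x hx
          rw [di_low hnA (mem_range.mp hx), if_neg (by omega)]
          simp
        have hS2 : ∀ x ∈ range (2 ^ n),
            (digitIndicator A α (2 ^ n + x) : ℂ) * Complex.exp (c * ((2 ^ n + x : ℕ) : ℂ))
            = Complex.exp (c * (2 ^ n : ℂ)) *
              ((digitIndicator (A.erase n) α x : ℂ) * Complex.exp (c * (x:ℂ))) := by
          intro x hx
          rw [di_high hnA hA (mem_range.mp hx), if_pos h1, hexp_add]
          ring
        rw [Finset.sum_congr rfl hS1, Finset.sum_congr rfl hS2]
        rw [h1, ← Finset.mul_sum]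
        push_cast
        rw [Finset.sum_const, smul_zero]
        simp [Complex.exp_zero]
        ring
    · -- n ∉ A
      have hA' : A ⊆ range n := by
        intro j hj
        have h2 := mem_range.mp (hA hj)
        have : j ≠ n := fun h => hnA (h ▸ hj)
        exact mem_range.mpr (by omega)
      have ihe := ih A hA' hα
      have hS2 : ∀ x ∈ range (2 ^ n),
          (digitIndicator A α (2 ^ n + x) : ℂ) * Complex.exp (c * ((2 ^ n + x : ℕ) : ℂ))
          = Complex.exp (c * (2 ^ n : ℂ)) *
            ((digitIndicator A α x : ℂ) * Complex.exp (c * (x:ℂ))) := by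
        intro x hx
        rw [di_notin hA', hexp_add]
        ring
      rw [Finset.sum_congr rfl hS2, ← Finset.mul_sum, if_neg hnA, ihe]
      push_cast
      ring


noncomputable def wfun (A : Finset ℕ) (θ : ℝ) (j : ℕ) : ℝ :=
  if j ∈ A then 1 else 2 * |Real.cos (π * (2 ^ j * θ))|

lemma abs_one_add_exp (t : ℝ) :
    ‖1 + Complex.exp (((2 * t : ℝ) : ℂ) * Complex.I)‖ = 2 * |Real.cos t| := by
  have e1 : Complex.exp ((t:ℂ) * Complex.I) * Complex.exp ((t:ℂ) * Complex.I)
      = Complex.exp (((2 * t : ℝ):ℂ) * Complex.I) := by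
    rw [← Complex.exp_add]; congr 1; push_cast; ring
  have e2 : Complex.exp (-((t:ℂ) * Complex.I)) * Complex.exp ((t:ℂ) * Complex.I) = 1 := by
    rw [← Complex.exp_add]; simp
  have key : 1 + Complex.exp (((2 * t : ℝ):ℂ) * Complex.I)
      = (2 * Complex.cos (t:ℂ)) * Complex.exp ((t:ℂ) * Complex.I) := by
    have h2c : 2 * Complex.cos (t:ℂ)
        = Complex.exp ((t:ℂ) * Complex.I) + Complex.exp (-((t:ℂ) * Complex.I)) := by
      rw [Complex.cos]
      ring_nf
    rw [h2c, add_mul, e1, e2]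
    ring
  rw [key, norm_mul, norm_mul]
  rw [Complex.norm_exp_ofReal_mul_I, ← Complex.ofReal_cos, Complex.norm_real]
  simp [mul_comm]

lemma abs_fhat (n : ℕ) (A : Finset ℕ) (α : ℕ → ℕ) (θ : ℝ) (hA : A ⊆ range n)
    (hα : ∀ j ∈ A, α j ≤ 1) :
    ‖fhat n A α θ‖ = (2 ^ n : ℝ)⁻¹ * ∏ j ∈ range n, wfun A θ j := by
  unfold fhat
  rw [prodFormula (2 * (Real.pi:ℂ) * Complex.I * (θ:ℂ)) α n A hA hα]
  rw [norm_mul, norm_inv, norm_prod]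
  congr 1
  · norm_num
  · apply Finset.prod_congr rfl
    intro j _
    unfold wfun
    by_cases hj : j ∈ A
    · rw [if_pos hj, if_pos hj]
      have harg : 2 * (Real.pi:ℂ) * Complex.I * (θ:ℂ) * ((α j : ℂ) * 2 ^ j)
          = ((2 * π * θ * (α j * 2 ^ j) : ℝ) : ℂ) * Complex.I := by push_cast; ring
      rw [harg, Complex.norm_exp_ofReal_mul_I]
    · rw [if_neg hj, if_neg hj]
      have harg : 2 * (Real.pi:ℂ) * Complex.I * (θ:ℂ) * (2 ^ j : ℂ)
          = ((2 * (π * (2 ^ j * θ)) : ℝ) : ℂ) * Complex.I := by push_cast; ring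
      rw [harg, abs_one_add_exp]


lemma wfun_nonneg (A : Finset ℕ) (θ : ℝ) (j : ℕ) : 0 ≤ wfun A θ j := by
  unfold wfun; split
  · norm_num
  · positivity

lemma pointwise_le : ∀ (s : ℕ) (A : Finset ℕ), A.card = s → ∀ (n : ℕ), A ⊆ range n →
    (0 ∈ A ∨ n = 0) → ∀ (y : ℕ) (θ : ℝ), (y:ℝ) / 2 ^ n ≤ θ → θ ≤ ((y:ℝ) + 1) / 2 ^ n →
    ∏ j ∈ range n, wfun A θ j ≤ W n A y := by
  intro s
  induction s with
  | zero =>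
    intro A hA n hsub hinv y θ h1 h2
    have hAe : A = ∅ := Finset.card_eq_zero.mp hA
    subst hAe
    have hn : n = 0 := by
      rcases hinv with h | h
      · simp at h
      · exact h
    subst hn
    simp [W_empty]
  | succ s ih =>
    intro A hA n hsub hinv y θ hθ1 hθ2
    have h : A.Nonempty := Finset.card_pos.mp (by omega)
    set m := A.max' h with hm
    have hmn : m < n := mem_range.mp (hsub (A.max'_mem h))
    have hcard : (A.erase m).card = s := by
      rw [Finset.card_erase_of_mem (A.max'_mem h), hA]; omega
    -- θ lies in the dyadic interval at level m for y' = y / 2^(n-m)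
    set y' := y / 2 ^ (n - m) with hy'
    have hpow : (2:ℝ) ^ n = 2 ^ m * 2 ^ (n - m) := by
      rw [← pow_add]; congr 1; omega
    have hdm : 2 ^ (n - m) * y' + y % 2 ^ (n - m) = y := Nat.div_add_mod y (2 ^ (n - m))
    have hrem : y % 2 ^ (n - m) < 2 ^ (n - m) := Nat.mod_lt _ (pow_pos (by norm_num) _)
    have hcast : (y:ℝ) = 2 ^ (n - m) * y' + (y % 2 ^ (n - m) : ℕ) := by
      exact_mod_cast congrArg (Nat.cast : ℕ → ℝ) hdm.symm
    have hcast2 : ((y % 2 ^ (n - m) : ℕ) : ℝ) < 2 ^ (n - m) := by exact_mod_cast hrem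
    have hcast3 : ((y % 2 ^ (n - m) : ℕ) : ℝ) + 1 ≤ 2 ^ (n - m) := by
      have : y % 2 ^ (n - m) + 1 ≤ 2 ^ (n - m) := hrem
      exact_mod_cast this
    have hp1 : (0:ℝ) < 2 ^ m := by positivity
    have hp2 : (0:ℝ) < 2 ^ (n - m) := by positivity
    have hθ1' : (y':ℝ) / 2 ^ m ≤ θ := by
      apply le_trans _ hθ1
      rw [hpow, div_le_div_iff₀ hp1 (by positivity)]
      have h0 : (0:ℝ) ≤ ((y % 2 ^ (n - m) : ℕ) : ℝ) := Nat.cast_nonneg _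
      nlinarith
    have hθ2' : θ ≤ ((y':ℝ) + 1) / 2 ^ m := by
      apply le_trans hθ2
      rw [hpow, div_le_div_iff₀ (by positivity) hp1]
      have hy1 : (y:ℝ) + 1 ≤ ((y':ℝ) + 1) * 2 ^ (n - m) := by
        have hexp : ((y':ℝ) + 1) * 2 ^ (n - m) = 2 ^ (n - m) * (y':ℝ) + 2 ^ (n - m) := by ring
        rw [hexp]
        linarith [hcast, hcast3]
      nlinarith [mul_le_mul_of_nonneg_right hy1 hp1.le]
    have ihe := ih (A.erase m) hcard m (erase_max_subset h hsub) (erase_max_inv h hsub hinv)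
      y' θ hθ1' hθ2'
    -- split the product
    have hsplit : ∏ j ∈ range n, wfun A θ j
        = (∏ j ∈ range (m+1), wfun A θ j) * ∏ j ∈ Ico (m+1) n, wfun A θ j := by
      rw [Finset.range_eq_Ico, Finset.range_eq_Ico]
      exact (Finset.prod_Ico_consecutive (wfun A θ) (m := 0) (n := m+1) (k := n) (by omega) (by omega)).symm
    have hm1 : wfun A θ m = 1 := by unfold wfun; rw [if_pos (A.max'_mem h)]
    have hlow : ∏ j ∈ range (m+1), wfun A θ j = ∏ j ∈ range m, wfun (A.erase m) θ j := by
      rw [Finset.prod_range_succ, hm1, mul_one]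
      apply Finset.prod_congr rfl
      intro j hj
      have hjm : j ≠ m := by have := mem_range.mp hj; omega
      unfold wfun
      by_cases hjA : j ∈ A
      · rw [if_pos hjA, if_pos (Finset.mem_erase.mpr ⟨hjm, hjA⟩)]
      · rw [if_neg hjA, if_neg (fun hc' => hjA (Finset.mem_of_mem_erase hc'))]
    have hhigh : ∏ j ∈ Ico (m+1) n, wfun A θ j
        = ∏ j ∈ Ico (m+1) n, (2 * |Real.cos (π * (2 ^ j * θ))|) := by
      apply Finset.prod_congr rfl
      intro j hj
      have hjm : m < j := (Finset.mem_Ico.mp hj).1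
      have hjA : j ∉ A := fun hc' => by
        have := A.le_max' j hc'
        omega
      unfold wfun
      rw [if_neg hjA]
    have hblock := blockBound n (m+1) y θ (by omega) hθ1 hθ2
    have hWnn : 0 ≤ W m (A.erase m) y' := W_nonneg s _ hcard _ _
    have hprod_nn : 0 ≤ ∏ j ∈ range m, wfun (A.erase m) θ j :=
      Finset.prod_nonneg (fun j _ => wfun_nonneg _ _ _)
    rw [hsplit, hlow, hhigh, W_eq n A y h, ← hm]
    have hidx : n - (m+1) = n - m - 1 := by omega
    rw [hidx] at hblock
    calc (∏ j ∈ range m, wfun (A.erase m) θ j) * ∏ j ∈ Ico (m+1) n, (2 * |Real.cos (π * (2 ^ j * θ))|)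
        ≤ W m (A.erase m) y' * G (n - m - 1) (y % 2 ^ (n - m - 1)) := by
          apply mul_le_mul ihe hblock (Finset.prod_nonneg (fun j _ => by positivity)) hWnn
      _ = G (n - m - 1) (y % 2 ^ (n - m - 1)) * W m (A.erase m) (y / 2 ^ (n - m)) := by
          rw [mul_comm, hy']


lemma fhat_abs_continuous (n : ℕ) (A : Finset ℕ) (α : ℕ → ℕ) :
    Continuous fun θ : ℝ => ‖fhat n A α θ‖ := by
  apply continuous_norm.comp
  unfold fhat
  apply Continuous.mul continuous_const
  apply continuous_finset_sum
  intro x _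
  apply Continuous.mul continuous_const
  apply Complex.continuous_exp.comp
  have : (fun θ : ℝ => 2 * (Real.pi:ℂ) * Complex.I * (θ:ℝ) * (x:ℕ))
      = fun θ : ℝ => (2 * (Real.pi:ℂ) * Complex.I * (x:ℕ)) * (θ:ℂ) := by
    funext θ; ring
  rw [this]
  exact continuous_const.mul Complex.continuous_ofReal

lemma integral_le (n : ℕ) (A : Finset ℕ) (α : ℕ → ℕ) (hA : A ⊆ range n)
    (hα : ∀ j ∈ A, α j ≤ 1) (hinv : 0 ∈ A ∨ n = 0) :
    ∫ θ in (0:ℝ)..1, ‖fhat n A α θ‖ ≤ ((2:ℝ) ^ n)⁻¹ * bnd n A := by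
  set f : ℝ → ℝ := fun θ => ‖fhat n A α θ‖ with hf
  have hcont : Continuous f := fhat_abs_continuous n A α
  set a : ℕ → ℝ := fun k => (k:ℝ) / 2 ^ n with ha
  have hint : ∀ k, IntervalIntegrable f MeasureTheory.volume (a k) (a (k+1)) :=
    fun k => hcont.intervalIntegrable _ _
  have hsum := intervalIntegral.sum_integral_adjacent_intervals
    (μ := MeasureTheory.volume) (a := a) (n := 2 ^ n) (fun k _ => hint k)
  have ha0 : a 0 = 0 := by simp [ha]
  have han : a (2 ^ n) = 1 := by
    simp only [ha]
    rw [div_eq_one_iff_eq (by positivity)]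
    norm_num
  rw [ha0, han] at hsum
  rw [← hsum]
  have hstep : ∀ y ∈ range (2 ^ n),
      (∫ θ in a y..a (y+1), f θ) ≤ ((2:ℝ)^n)⁻¹ * (((2:ℝ)^n)⁻¹ * W n A y) := by
    intro y _
    have hle : a y ≤ a (y + 1) := by
      simp only [ha]
      gcongr
      push_cast
      linarith
    have hptw : ∀ θ ∈ Set.Icc (a y) (a (y+1)), f θ ≤ ((2:ℝ)^n)⁻¹ * W n A y := by
      intro θ hθ
      rw [hf]
      simp only []
      rw [abs_fhat n A α θ hA hα]
      have h1 : (y:ℝ) / 2 ^ n ≤ θ := hθ.1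
      have h2 : θ ≤ ((y:ℝ) + 1) / 2 ^ n := by
        have := hθ.2
        simp only [ha] at this
        push_cast at this
        exact this
      have := pointwise_le A.card A rfl n hA hinv y θ h1 h2
      have h2n : (0:ℝ) ≤ ((2:ℝ)^n)⁻¹ := by positivity
      exact mul_le_mul_of_nonneg_left this h2n
    calc (∫ θ in a y..a (y+1), f θ)
        ≤ ∫ _ in a y..a (y+1), ((2:ℝ)^n)⁻¹ * W n A y :=
          intervalIntegral.integral_mono_on hle (hint y)
            (intervalIntegrable_const) hptw
      _ = (a (y+1) - a y) * (((2:ℝ)^n)⁻¹ * W n A y) := by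
          rw [intervalIntegral.integral_const, smul_eq_mul]
      _ = ((2:ℝ)^n)⁻¹ * (((2:ℝ)^n)⁻¹ * W n A y) := by
          congr 1
          simp only [ha]
          push_cast
          field_simp
          ring
    
  calc ∑ k ∈ range (2 ^ n), ∫ θ in a k..a (k+1), f θ
      ≤ ∑ y ∈ range (2 ^ n), ((2:ℝ)^n)⁻¹ * (((2:ℝ)^n)⁻¹ * W n A y) :=
        Finset.sum_le_sum hstep
    _ = ((2:ℝ)^n)⁻¹ * (((2:ℝ)^n)⁻¹ * ∑ y ∈ range (2 ^ n), W n A y) := by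
        rw [← Finset.mul_sum, ← Finset.mul_sum]
    _ ≤ ((2:ℝ)^n)⁻¹ * (((2:ℝ)^n)⁻¹ * ((2:ℝ)^n * bnd n A)) := by
        have hsw := sumW_le A.card A rfl n hA hinv
        have h1 : (0:ℝ) ≤ ((2:ℝ)^n)⁻¹ := by positivity
        apply mul_le_mul_of_nonneg_left _ h1
        apply mul_le_mul_of_nonneg_left _ h1
        exact_mod_cast hsw
    _ = ((2:ℝ)^n)⁻¹ * bnd n A := by
        field_simp


theorem integral_abs_fhat_bound :
    ∃ C : ℝ, 0 < C ∧ ∀ (n : ℕ) (A : Finset ℕ) (α : ℕ → ℕ) (r : ℕ),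
      A ⊆ Finset.range n → 0 ∈ A → (∀ j ∈ A, α j ≤ 1) → α 0 = 1 → A.card = r + 1 →
      ((r : ℝ) + 1) / n ≤ 1 / 2 →
      (2 : ℝ) ^ r * ∫ θ in (0 : ℝ)..1, ‖fhat n A α θ‖
        ≤ (2 : ℝ) ^
            (C * (((r : ℝ) + 1) / n) * Real.log (1 / (((r : ℝ) + 1) / n)) * n - n) := by
  refine ⟨5, by norm_num, ?_⟩
  intro n A α r hA h0 hα hα0 hcard hρ
  have hn0 : n ≠ 0 := by
    intro h; subst h; simpa using hA h0
  have hnpos : 0 < n := Nat.pos_of_ne_zero hn0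
  have hnR : (0:ℝ) < n := by exact_mod_cast hnpos
  have hrR : (0:ℝ) < (r:ℝ) + 1 := by positivity
  have h2s : 2 * ((r:ℝ) + 1) ≤ n := by
    rw [div_le_div_iff₀ hnR (by norm_num : (0:ℝ) < 2)] at hρ
    linarith
  set T : ℝ := (n:ℝ) / ((r:ℝ) + 1) with hT
  have hT2 : 2 ≤ T := by rw [hT, le_div_iff₀ hrR]; linarith
  have hT0 : 0 < T := by linarith
  have hbnd := bnd_le (r+1) A hcard n hA (Or.inl h0) T (by linarith)
  have hnT : (n:ℝ) / T = (r:ℝ) + 1 := by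
    rw [hT, div_div_eq_mul_div]
    field_simp
  have hTe : (n:ℝ) / T - ((r + 1 : ℕ) : ℝ) = 0 := by
    rw [hnT]; push_cast; ring
  rw [hTe, Real.exp_zero, mul_one] at hbnd
  have hint := integral_le n A α hA hα (Or.inl h0)
  -- exponent bookkeeping
  set a : ℝ := Real.log 2 with haa
  set b : ℝ := Real.log T with hbb
  have ha1 : 0.6931471803 < a := Real.log_two_gt_d9
  have ha2 : a < 0.6931471808 := Real.log_two_lt_d9
  have hb : a ≤ b := by
    rw [haa, hbb]
    exact Real.log_le_log (by norm_num) hT2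
  have hs1 : (1:ℝ) ≤ (r:ℝ) + 1 := by
    have := Nat.cast_nonneg (α := ℝ) r
    linarith
  set X : ℝ := 5 * ((r:ℝ) + 1) * b with hX
  have hkey : (2:ℝ) ^ r * 2 ^ (r+1) * T ^ (r+1) ≤ (2:ℝ) ^ X := by
    have h2pow : (2:ℝ) ^ r * 2 ^ (r+1) = 2 ^ (2*r+1) := by
      rw [← pow_add]; congr 1; omega
    have e1 : (2:ℝ) ^ (2*r+1) = Real.exp (a * (2*(r:ℝ)+1)) := by
      rw [← Real.rpow_natCast 2 (2*r+1), Real.rpow_def_of_pos (by norm_num)]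
      congr 1
      push_cast
      ring
    have e2 : T ^ (r+1) = Real.exp (b * ((r:ℝ)+1)) := by
      rw [← Real.rpow_natCast T (r+1), Real.rpow_def_of_pos hT0]
      congr 1
      push_cast
      ring
    have e3 : (2:ℝ) ^ X = Real.exp (a * X) := by
      rw [Real.rpow_def_of_pos (by norm_num)]
    rw [h2pow, e1, e2, e3, ← Real.exp_add, Real.exp_le_exp, hX]
    have h5 : 0 ≤ 5*a*b - 2*a - b := by
      nlinarith [mul_nonneg (sub_nonneg.2 hb) (by nlinarith : (0:ℝ) ≤ 5*a - 1)]
    nlinarith [mul_nonneg h5 (by positivity : (0:ℝ) ≤ (r:ℝ)+1)]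
  -- right-hand side rewriting
  have hErw : 1 / (((r:ℝ) + 1) / n) = T := by
    rw [one_div_div]
  have hE : 5 * (((r:ℝ) + 1) / n) * Real.log T * (n:ℝ) = X := by
    rw [hX, hbb]
    field_simp
  have hRHS : (2:ℝ) ^ (5 * (((r:ℝ) + 1) / n) * Real.log (1 / (((r:ℝ) + 1) / n)) * n - n)
      = (2:ℝ) ^ X / 2 ^ n := by
    rw [hErw, hE, Real.rpow_sub (by norm_num : (0:ℝ) < 2), Real.rpow_natCast]
  rw [hRHS]
  have h2n : (0:ℝ) < 2 ^ n := by positivity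
  calc (2:ℝ) ^ r * ∫ θ in (0:ℝ)..1, ‖fhat n A α θ‖
      ≤ (2:ℝ) ^ r * (((2:ℝ) ^ n)⁻¹ * bnd n A) :=
        mul_le_mul_of_nonneg_left hint (by positivity)
    _ ≤ (2:ℝ) ^ r * (((2:ℝ) ^ n)⁻¹ * (2 ^ (r+1) * T ^ (r+1))) := by
        apply mul_le_mul_of_nonneg_left _ (by positivity)
        apply mul_le_mul_of_nonneg_left hbnd (by positivity)
    _ = ((2:ℝ) ^ r * 2 ^ (r+1) * T ^ (r+1)) / 2 ^ n := by ring
    _ ≤ (2:ℝ) ^ X / 2 ^ n := by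
        gcongr
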